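/- (Concentration inequality for subsample Rademacher complexity) Let n ∼ Binomial(m, 1−p) count the supervised samples among m joint samples. For δ ∈ (0,1) and m large enough that 1−p−√(log(1/δ)/(2m)) > 0, with probability at least 1−δ over n, R_n(F, D) ≤ R_m(F, D) / (1−p−√(log(1/δ)/(2m))). -/

import Mathlib

open scoped BigOperators
open MeasureTheory

/-- Sign of a Rademacher variable encoded as a Boolean. -/
noncomputable def rsign (b : Bool) : ℝ := if b then 1 else -1

/-- Empirical Rademacher complexity of a family `F` with respect to a sample. -/
noncomputable def empRad {X : Type*} (F : Set (X → ℝ)) (m : ℕ) (x : Fin m → X) : ℝ :=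
  (∑ η : Fin m → Bool,
    sSup {r : ℝ | ∃ f ∈ F, r = (1 / (m : ℝ)) * ∑ i, rsign (η i) * f (x i)}) / 2 ^ m

/-- Rademacher complexity of `F` over `m` i.i.d. samples drawn from `D`. -/
noncomputable def Rad {X : Type*} [MeasurableSpace X] (F : Set (X → ℝ)) (m : ℕ)
    (D : Measure X) : ℝ :=
  ∫ x : Fin m → X, empRad F m x ∂(Measure.pi fun _ : Fin m => D)

section Lemmas


variable {X : Type*} {F : Set (X → ℝ)} {C : ℝ}

lemma rsign_abs (b : Bool) : |rsign b| = 1 := by cases b <;> simp [rsign]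

lemma rsign_not (b : Bool) : rsign (!b) = -rsign b := by cases b <;> simp [rsign]

/-- unnormalized sup -/
noncomputable def gU (F : Set (X → ℝ)) (m : ℕ) (x : Fin m → X) (η : Fin m → Bool) : ℝ :=
  sSup {r : ℝ | ∃ f ∈ F, r = ∑ i, rsign (η i) * f (x i)}

lemma sum_abs_le (hbdd : ∀ f ∈ F, ∀ x : X, |f x| ≤ C) {m : ℕ} (x : Fin m → X)
    (η : Fin m → Bool) {f : X → ℝ} (hf : f ∈ F) :
    |∑ i, rsign (η i) * f (x i)| ≤ m * |C| := by
  calc |∑ i, rsign (η i) * f (x i)| ≤ ∑ i, |rsign (η i) * f (x i)| :=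
        Finset.abs_sum_le_sum_abs _ _
    _ ≤ ∑ _i : Fin m, |C| := by
        apply Finset.sum_le_sum
        intro i _
        rw [abs_mul, rsign_abs, one_mul]
        exact (hbdd f hf (x i)).trans (le_abs_self C)
    _ = m * |C| := by simp [mul_comm]

lemma gU_bddAbove (hbdd : ∀ f ∈ F, ∀ x : X, |f x| ≤ C) {m : ℕ} (x : Fin m → X)
    (η : Fin m → Bool) :
    BddAbove {r : ℝ | ∃ f ∈ F, r = ∑ i, rsign (η i) * f (x i)} := by
  refine ⟨m * |C|, fun r hr => ?_⟩
  obtain ⟨f, hf, rfl⟩ := hr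
  exact (le_abs_self _).trans (sum_abs_le hbdd x η hf)

lemma gU_nonempty (hF : F.Nonempty) {m : ℕ} (x : Fin m → X) (η : Fin m → Bool) :
    {r : ℝ | ∃ f ∈ F, r = ∑ i, rsign (η i) * f (x i)}.Nonempty := by
  obtain ⟨f, hf⟩ := hF
  exact ⟨_, f, hf, rfl⟩

lemma S_bddAbove (hbdd : ∀ f ∈ F, ∀ x : X, |f x| ≤ C) {m : ℕ} (x : Fin m → X)
    (η : Fin m → Bool) :
    BddAbove {r : ℝ | ∃ f ∈ F, r = (1 / (m : ℝ)) * ∑ i, rsign (η i) * f (x i)} := by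
  refine ⟨|C|, fun r hr => ?_⟩
  obtain ⟨f, hf, rfl⟩ := hr
  rcases Nat.eq_zero_or_pos m with hm | hm
  · subst hm; simp
  calc (1 / (m : ℝ)) * ∑ i, rsign (η i) * f (x i)
      ≤ |(1 / (m : ℝ)) * ∑ i, rsign (η i) * f (x i)| := le_abs_self _
    _ = (1 / (m : ℝ)) * |∑ i, rsign (η i) * f (x i)| := by
        rw [abs_mul, abs_of_nonneg (by positivity : (0:ℝ) ≤ 1 / (m:ℝ))]
    _ ≤ (1 / (m : ℝ)) * (m * |C|) := by
        apply mul_le_mul_of_nonneg_left (sum_abs_le hbdd x η hf) (by positivity)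
    _ = |C| := by
        field_simp

lemma mul_empRad_eq (hF : F.Nonempty) (hbdd : ∀ f ∈ F, ∀ x : X, |f x| ≤ C) (m : ℕ)
    (x : Fin m → X) :
    (m : ℝ) * empRad F m x = (∑ η : Fin m → Bool, gU F m x η) / 2 ^ m := by
  rcases Nat.eq_zero_or_pos m with hm | hm
  · subst hm
    simp only [Nat.cast_zero, zero_mul, pow_zero, div_one]
    rw [eq_comm, Fintype.sum_eq_zero]
    intro η
    have hset : {r : ℝ | ∃ f ∈ F, r = ∑ i : Fin 0, rsign (η i) * f (x i)} = {0} := by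
      ext r
      simp only [Set.mem_setOf_eq, Set.mem_singleton_iff, Finset.univ_eq_empty,
        Finset.sum_empty]
      exact ⟨fun ⟨f, _, h⟩ => h, fun h => ⟨hF.choose, hF.choose_spec, h⟩⟩
    rw [gU, hset, csSup_singleton]
  · have key : ∀ η : Fin m → Bool,
        (m : ℝ) * sSup {r : ℝ | ∃ f ∈ F, r = (1 / (m : ℝ)) * ∑ i, rsign (η i) * f (x i)}
          = gU F m x η := by
      intro η
      have hm' : (0:ℝ) < m := by exact_mod_cast hm
      apply le_antisymm
      · rw [mul_comm, ← le_div_iff₀ hm']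
        apply csSup_le (by obtain ⟨f, hf⟩ := hF; exact ⟨_, f, hf, rfl⟩)
        rintro r ⟨f, hf, rfl⟩
        have h1 : ∑ i, rsign (η i) * f (x i) ≤ gU F m x η :=
          le_csSup (gU_bddAbove hbdd x η) ⟨f, hf, rfl⟩
        calc (1 / (m:ℝ)) * ∑ i, rsign (η i) * f (x i)
            ≤ (1 / (m:ℝ)) * gU F m x η := by
              apply mul_le_mul_of_nonneg_left h1 (by positivity)
          _ = gU F m x η / m := by ring
      · apply csSup_le (gU_nonempty hF x η)
        rintro r ⟨f, hf, rfl⟩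
        have h1 : (1/(m:ℝ)) * ∑ i, rsign (η i) * f (x i)
            ≤ sSup {r : ℝ | ∃ f ∈ F, r = (1 / (m : ℝ)) * ∑ i, rsign (η i) * f (x i)} :=
          le_csSup (S_bddAbove hbdd x η) ⟨f, hf, rfl⟩
        calc ∑ i, rsign (η i) * f (x i)
            = (m:ℝ) * ((1/(m:ℝ)) * ∑ i, rsign (η i) * f (x i)) := by field_simp
          _ ≤ (m:ℝ) * sSup {r : ℝ | ∃ f ∈ F, r = (1 / (m : ℝ)) * ∑ i, rsign (η i) * f (x i)} :=
              mul_le_mul_of_nonneg_left h1 (le_of_lt hm')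
    rw [empRad, ← mul_div_assoc, Finset.mul_sum]
    congr 1
    exact Finset.sum_congr rfl fun η _ => key η

lemma empRad_nonneg (hF : F.Nonempty) (hbdd : ∀ f ∈ F, ∀ x : X, |f x| ≤ C) (m : ℕ)
    (x : Fin m → X) : 0 ≤ empRad F m x := by
  obtain ⟨f0, hf0⟩ := hF
  have hval : ∀ η : Fin m → Bool,
      (1 / (m : ℝ)) * ∑ i, rsign (η i) * f0 (x i)
        ≤ sSup {r : ℝ | ∃ f ∈ F, r = (1 / (m : ℝ)) * ∑ i, rsign (η i) * f (x i)} :=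
    fun η => le_csSup (S_bddAbove hbdd x η) ⟨f0, hf0, rfl⟩
  have hzero : ∑ η : Fin m → Bool, ((1 / (m : ℝ)) * ∑ i, rsign (η i) * f0 (x i)) = 0 := by
    rw [← Finset.mul_sum]
    have : ∑ η : Fin m → Bool, ∑ i, rsign (η i) * f0 (x i) = 0 := by
      have hinv : Function.Involutive (fun η : Fin m → Bool => fun i => !(η i)) := by
        intro η; funext i; simp
      set e : Equiv.Perm (Fin m → Bool) := hinv.toPerm _ with he
      have h1 : ∑ η : Fin m → Bool, ∑ i, rsign (η i) * f0 (x i)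
          = ∑ η : Fin m → Bool, ∑ i, rsign ((e η) i) * f0 (x i) :=
        (Equiv.sum_comp e _).symm
      have h2 : ∀ η : Fin m → Bool, ∑ i, rsign ((e η) i) * f0 (x i)
          = -∑ i, rsign (η i) * f0 (x i) := by
        intro η
        rw [← Finset.sum_neg_distrib]
        apply Finset.sum_congr rfl
        intro i _
        show rsign (!(η i)) * f0 (x i) = -(rsign (η i) * f0 (x i))
        rw [rsign_not]; ring
      rw [Finset.sum_congr rfl (fun η _ => h2 η)] at h1
      simp only [Finset.sum_neg_distrib] at h1
      linarith
    rw [this, mul_zero]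
  have hsum : (0:ℝ) ≤ ∑ η : Fin m → Bool,
      sSup {r : ℝ | ∃ f ∈ F, r = (1 / (m : ℝ)) * ∑ i, rsign (η i) * f (x i)} := by
    rw [← hzero]
    exact Finset.sum_le_sum fun η _ => hval η
  exact div_nonneg hsum (by positivity)

lemma step_pointwise (hF : F.Nonempty) (hbdd : ∀ f ∈ F, ∀ x : X, |f x| ≤ C) (m : ℕ)
    (x : Fin (m + 1) → X) :
    (m : ℝ) * empRad F m (x ∘ Fin.succ) ≤ ((m : ℝ) + 1) * empRad F (m + 1) x := by
  have h1 := mul_empRad_eq hF hbdd m (x ∘ Fin.succ)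
  have h2 := mul_empRad_eq hF hbdd (m + 1) x
  push_cast at h2
  rw [h1, h2]
  have key : ∀ η' : Fin m → Bool,
      2 * gU F m (x ∘ Fin.succ) η'
        ≤ gU F (m+1) x (Fin.cons true η') + gU F (m+1) x (Fin.cons false η') := by
    intro η'
    have expand : ∀ (b : Bool) (f : X → ℝ),
        ∑ i : Fin (m+1), rsign ((Fin.cons b η' : Fin (m+1) → Bool) i) * f (x i)
          = rsign b * f (x 0) + ∑ i : Fin m, rsign (η' i) * f (x i.succ) := by
      intro b f
      rw [Fin.sum_univ_succ]
      simp [Fin.cons_zero, Fin.cons_succ]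
    have hle : gU F m (x ∘ Fin.succ) η'
        ≤ (gU F (m+1) x (Fin.cons true η') + gU F (m+1) x (Fin.cons false η')) / 2 := by
      apply csSup_le (gU_nonempty hF _ _)
      rintro r ⟨f, hf, rfl⟩
      have hA : ∑ i : Fin m, rsign (η' i) * f (x i.succ) + f (x 0)
          ≤ gU F (m+1) x (Fin.cons true η') := by
        apply le_csSup (gU_bddAbove hbdd _ _)
        exact ⟨f, hf, by rw [expand true f]; simp [rsign]; ring⟩
      have hB : ∑ i : Fin m, rsign (η' i) * f (x i.succ) - f (x 0)
          ≤ gU F (m+1) x (Fin.cons false η') := by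
        apply le_csSup (gU_bddAbove hbdd _ _)
        exact ⟨f, hf, by rw [expand false f]; simp [rsign]; ring⟩
      have hy : ∀ i : Fin m, (x ∘ Fin.succ) i = x i.succ := fun i => rfl
      simp only [hy]
      linarith
    linarith [hle]
  have hsum : ∑ η' : Fin m → Bool, 2 * gU F m (x ∘ Fin.succ) η'
      ≤ ∑ η : Fin (m+1) → Bool, gU F (m+1) x η := by
    have he : ∑ η : Fin (m+1) → Bool, gU F (m+1) x η
        = ∑ q : Bool × (Fin m → Bool), gU F (m+1) x (Fin.cons q.1 q.2) := by
      exact (Equiv.sum_comp (Fin.consEquiv fun _ => Bool) (gU F (m+1) x)).symm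
    rw [he, Fintype.sum_prod_type, Fintype.sum_bool]
    rw [← Finset.sum_add_distrib]
    exact Finset.sum_le_sum fun η' _ => key η'
  calc (∑ η : Fin m → Bool, gU F m (x ∘ Fin.succ) η) / 2 ^ m
      = (∑ η' : Fin m → Bool, 2 * gU F m (x ∘ Fin.succ) η') / 2 ^ (m+1) := by
        rw [← Finset.mul_sum]
        ring
    _ ≤ (∑ η : Fin (m+1) → Bool, gU F (m+1) x η) / 2 ^ (m+1) :=
        div_le_div_of_nonneg_right hsum (by positivity) |>.trans_eq rfl

variable [MeasurableSpace X] {D : Measure X} [IsProbabilityMeasure D]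

omit [IsProbabilityMeasure D] in
lemma Rad_nonneg (hF : F.Nonempty) (hbdd : ∀ f ∈ F, ∀ x : X, |f x| ≤ C) (m : ℕ) :
    0 ≤ Rad F m D :=
  integral_nonneg fun x => empRad_nonneg hF hbdd m x

lemma Rad_step (hF : F.Nonempty) (hbdd : ∀ f ∈ F, ∀ x : X, |f x| ≤ C)
    (hmeas : ∀ k : ℕ, Integrable (empRad F k) (Measure.pi fun _ : Fin k => D)) (m : ℕ) :
    (m : ℝ) * Rad F m D ≤ ((m : ℝ) + 1) * Rad F (m + 1) D := by
  have hT : MeasurePreserving (fun x : Fin (m+1) → X => x ∘ Fin.succ)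
      (Measure.pi fun _ : Fin (m+1) => D) (Measure.pi fun _ : Fin m => D) := by
    have h1 := MeasureTheory.measurePreserving_piFinSuccAbove (fun _ : Fin (m+1) => D) 0
    have h2 : MeasurePreserving (Prod.snd : X × (Fin m → X) → (Fin m → X))
        (D.prod (Measure.pi fun _ : Fin m => D)) (Measure.pi fun _ : Fin m => D) :=
      ⟨measurable_snd, by simp⟩
    have h3 := h2.comp h1
    have hfun : ((Prod.snd : X × (Fin m → X) → (Fin m → X))
          ∘ (MeasurableEquiv.piFinSuccAbove (fun _ : Fin (m+1) => X) 0))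
        = (fun x : Fin (m+1) → X => x ∘ Fin.succ) := by
      funext x
      funext j
      show x ((0 : Fin (m+1)).succAbove j) = x j.succ
      rw [Fin.succAbove_zero]
    rwa [hfun] at h3
  have hint : Integrable (fun x : Fin (m+1) → X => empRad F m (x ∘ Fin.succ))
      (Measure.pi fun _ : Fin (m+1) => D) :=
    (hT.integrable_comp (hmeas m).aestronglyMeasurable).2 (hmeas m)
  have ham : AEStronglyMeasurable (empRad F m)
      (Measure.map (fun x : Fin (m+1) → X => x ∘ Fin.succ)
        (Measure.pi fun _ : Fin (m+1) => D)) := by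
    rw [hT.map_eq]; exact (hmeas m).aestronglyMeasurable
  have heq : ∫ x : Fin (m+1) → X, empRad F m (x ∘ Fin.succ)
        ∂(Measure.pi fun _ : Fin (m+1) => D) = Rad F m D := by
    rw [Rad, ← hT.map_eq, integral_map hT.aemeasurable ham]
  have hmono : ∫ x : Fin (m+1) → X, (m : ℝ) * empRad F m (x ∘ Fin.succ)
        ∂(Measure.pi fun _ : Fin (m+1) => D)
      ≤ ∫ x : Fin (m+1) → X, ((m : ℝ) + 1) * empRad F (m+1) x
        ∂(Measure.pi fun _ : Fin (m+1) => D) := by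
    apply integral_mono (hint.const_mul _) ((hmeas (m+1)).const_mul _)
    intro x
    exact step_pointwise hF hbdd m x
  rw [integral_const_mul, integral_const_mul, heq] at hmono
  exact hmono

lemma Rad_mono (hF : F.Nonempty) (hbdd : ∀ f ∈ F, ∀ x : X, |f x| ≤ C)
    (hmeas : ∀ k : ℕ, Integrable (empRad F k) (Measure.pi fun _ : Fin k => D))
    {n m : ℕ} (h : n ≤ m) :
    (n : ℝ) * Rad F n D ≤ (m : ℝ) * Rad F m D := by
  induction m, h using Nat.le_induction with
  | base => exact le_refl _
  | succ m hnm ih =>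
      refine ih.trans ?_
      have := Rad_step hF hbdd hmeas m
      push_cast
      linarith


end Lemmas



lemma hoeff_scalar (p q : ℝ) (hp : 0 ≤ p) (hq : 0 ≤ q) (hpq : p + q = 1) (t : ℝ) :
    p * Real.exp (q * t) + q * Real.exp (-(p * t)) ≤ Real.exp (t ^ 2 / 8) := by
  rcases eq_or_lt_of_le hp with hp0 | hp0
  · have hq1 : q = 1 := by linarith
    simp only [← hp0, hq1, zero_mul, one_mul, neg_zero, Real.exp_zero, zero_add, mul_one]
    exact Real.one_le_exp (by positivity)
  rcases eq_or_lt_of_le hq with hq0 | hq0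
  · have hp1 : p = 1 := by linarith
    simp only [← hq0, hp1, one_mul, zero_mul, Real.exp_zero, mul_one, add_zero, mul_zero]
    exact Real.one_le_exp (by positivity)
  -- main case 0 < p, 0 < q
  set g : ℝ → ℝ := fun s => p * Real.exp (q * s) + q * Real.exp (-(p * s)) with hg
  have hgpos : ∀ s, 0 < g s := fun s => by positivity
  set g' : ℝ → ℝ := fun s => p * q * (Real.exp (q * s) - Real.exp (-(p * s))) with hg'
  have hdg : ∀ s, HasDerivAt g (g' s) s := by
    intro s
    have hq' : HasDerivAt (fun s : ℝ => q * s) q s := by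
      simpa using (hasDerivAt_id s).const_mul q
    have hp' : HasDerivAt (fun s : ℝ => -(p * s)) (-p) s := by
      simpa using ((hasDerivAt_id s).const_mul p).fun_neg
    have h1 : HasDerivAt (fun s => Real.exp (q * s)) (Real.exp (q * s) * q) s := hq'.exp
    have h2 : HasDerivAt (fun s => Real.exp (-(p * s))) (Real.exp (-(p * s)) * (-p)) s := hp'.exp
    have := (h1.const_mul p).add (h2.const_mul q)
    exact this.congr_deriv (by ring)
  set φ : ℝ → ℝ := fun s => s ^ 2 / 8 - Real.log (g s) with hφ
  set φ' : ℝ → ℝ := fun s => s / 4 - g' s / g s with hφ'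
  have hdφ : ∀ s, HasDerivAt φ (φ' s) s := by
    intro s
    have h1 : HasDerivAt (fun s : ℝ => s ^ 2 / 8) (s / 4) s := by
      have := (hasDerivAt_pow 2 s).div_const 8
      exact this.congr_deriv (by push_cast; ring)
    have h2 : HasDerivAt (fun s => Real.log (g s)) (g' s / g s) s := by
      have := (hdg s).log (hgpos s).ne'
      simpa using this
    exact h1.sub h2
  set g'' : ℝ → ℝ := fun s => p * q * (q * Real.exp (q * s) + p * Real.exp (-(p * s))) with hg''
  have hdg' : ∀ s, HasDerivAt g' (g'' s) s := by
    intro s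
    have hq' : HasDerivAt (fun s : ℝ => q * s) q s := by
      simpa using (hasDerivAt_id s).const_mul q
    have hp' : HasDerivAt (fun s : ℝ => -(p * s)) (-p) s := by
      simpa using ((hasDerivAt_id s).const_mul p).fun_neg
    have h1 : HasDerivAt (fun s => Real.exp (q * s)) (Real.exp (q * s) * q) s := hq'.exp
    have h2 : HasDerivAt (fun s => Real.exp (-(p * s))) (Real.exp (-(p * s)) * (-p)) s := hp'.exp
    have := (h1.sub h2).const_mul (p * q)
    exact this.congr_deriv (by ring)
  set E : ℝ → ℝ := fun s => 1 / 4 - (g'' s * g s - g' s * g' s) / (g s) ^ 2 with hE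
  have hdφ' : ∀ s, HasDerivAt φ' (E s) s := by
    intro s
    have h1 : HasDerivAt (fun s : ℝ => s / 4) (1 / 4) s := (hasDerivAt_id s).div_const 4
    have h2 : HasDerivAt (fun s => g' s / g s) ((g'' s * g s - g' s * g' s) / (g s) ^ 2) s :=
      (hdg' s).div (hdg s) (hgpos s).ne'
    exact h1.sub h2
  have hEnn : ∀ s, 0 ≤ E s := by
    intro s
    have ha : 0 < Real.exp (q * s) := Real.exp_pos _
    have hb : 0 < Real.exp (-(p * s)) := Real.exp_pos _
    simp only [hE, hg'', hg', hg]
    have hnum : p * q * (q * Real.exp (q * s) + p * Real.exp (-(p * s)))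
          * (p * Real.exp (q * s) + q * Real.exp (-(p * s)))
        - p * q * (Real.exp (q * s) - Real.exp (-(p * s)))
          * (p * q * (Real.exp (q * s) - Real.exp (-(p * s))))
        = p * q * Real.exp (q * s) * Real.exp (-(p * s)) := by
      linear_combination (p * q * Real.exp (q * s) * Real.exp (-(p * s)) * (p + q + 1)) * hpq
    have hg2 : (0:ℝ) < (p * Real.exp (q * s) + q * Real.exp (-(p * s))) ^ 2 := by positivity
    have h4 : 4 * (p * q * Real.exp (q * s) * Real.exp (-(p * s)))
        ≤ (p * Real.exp (q * s) + q * Real.exp (-(p * s))) ^ 2 := by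
      nlinarith [sq_nonneg (p * Real.exp (q * s) - q * Real.exp (-(p * s)))]
    rw [sub_nonneg, hnum, div_le_iff₀ hg2]
    linarith
  have hφ'mono : Monotone φ' := monotone_of_hasDerivAt_nonneg hdφ' hEnn
  have hφ'0 : φ' 0 = 0 := by simp [hφ', hg', hg]
  have hφ0 : φ 0 = 0 := by simp [hφ, hg, hpq]
  have key : 0 ≤ φ t := by
    rcases le_total 0 t with ht | ht
    · have hmono : MonotoneOn φ (Set.Ici (0:ℝ)) := by
        apply monotoneOn_of_hasDerivWithinAt_nonneg (convex_Ici 0)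
          (fun s _ => (hdφ s).continuousAt.continuousWithinAt)
          (fun s hs => (hdφ s).hasDerivWithinAt)
        intro s hs
        rw [interior_Ici] at hs
        have : φ' 0 ≤ φ' s := hφ'mono (le_of_lt hs)
        linarith [hφ'0 ▸ this]
      have := hmono (Set.mem_Ici.2 le_rfl) (Set.mem_Ici.2 ht) ht
      linarith [hφ0 ▸ this]
    · have hmono : AntitoneOn φ (Set.Iic (0:ℝ)) := by
        apply antitoneOn_of_hasDerivWithinAt_nonpos (convex_Iic 0)
          (fun s _ => (hdφ s).continuousAt.continuousWithinAt)
          (fun s hs => (hdφ s).hasDerivWithinAt)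
        intro s hs
        rw [interior_Iic] at hs
        have : φ' s ≤ φ' 0 := hφ'mono (le_of_lt hs)
        linarith [hφ'0 ▸ this]
      have := hmono (Set.mem_Iic.2 ht) (Set.mem_Iic.2 le_rfl) ht
      linarith [hφ0 ▸ this]
  have : Real.log (g t) ≤ t ^ 2 / 8 := by simp only [hφ] at key; linarith
  calc g t = Real.exp (Real.log (g t)) := (Real.exp_log (hgpos t)).symm
    _ ≤ Real.exp (t ^ 2 / 8) := Real.exp_le_exp.2 this

/-- Concentration inequality for the subsample Rademacher complexity.
If the number `n` of supervised samples among `m` joint samples is distributed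
as `Binomial(m, 1-p)` (so `P[n = k] = C(m,k)(1-p)^k p^{m-k}`), then with
probability at least `1 - δ` over `n`,
`R_n(F, D) ≤ R_m(F, D) / (1 - p - √(log(1/δ)/(2m)))`. -/
theorem rad_subsample_concentration {X : Type*} [MeasurableSpace X]
    (F : Set (X → ℝ)) (hF : F.Nonempty)
    (C : ℝ) (hbdd : ∀ f ∈ F, ∀ x : X, |f x| ≤ C)
    (D : Measure X) [IsProbabilityMeasure D]
    (hmeas : ∀ k : ℕ, Integrable (empRad F k) (Measure.pi fun _ : Fin k => D))
    (p : ℝ) (hp0 : 0 ≤ p) (hp1 : p ≤ 1)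
    (δ : ℝ) (hδ0 : 0 < δ) (hδ1 : δ < 1) (m : ℕ)
    (hm : 0 < 1 - p - Real.sqrt (Real.log (1 / δ) / (2 * m))) :
    1 - δ ≤ ∑ k ∈ (Finset.range (m + 1)).filter (fun k : ℕ =>
        Rad F k D ≤ Rad F m D / (1 - p - Real.sqrt (Real.log (1 / δ) / (2 * m)))),
      (m.choose k : ℝ) * (1 - p) ^ k * p ^ (m - k) := by

  classical
  set ε := Real.sqrt (Real.log (1 / δ) / (2 * m)) with hε
  have hεnn : 0 ≤ ε := Real.sqrt_nonneg _
  have hq0 : 0 < 1 - p := by linarith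
  have hRadnn : 0 ≤ Rad F m D := Rad_nonneg hF hbdd m
  set P : ℕ → Prop := fun k => Rad F k D ≤ Rad F m D / (1 - p - ε) with hP
  set w : ℕ → ℝ := fun k => (m.choose k : ℝ) * (1 - p) ^ k * p ^ (m - k) with hw
  have hwnn : ∀ k, 0 ≤ w k := by
    intro k
    apply mul_nonneg (mul_nonneg (by positivity) (pow_nonneg (by linarith) _)) (pow_nonneg hp0 _)
  have htotal : ∑ k ∈ Finset.range (m + 1), w k = 1 := by
    have h := add_pow (1 - p) p m
    rw [sub_add_cancel, one_pow] at h
    rw [eq_comm, h]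
    apply Finset.sum_congr rfl
    intro k _
    simp only [hw]
    ring
  rcases Nat.eq_zero_or_pos m with hm0 | hm0
  · subst hm0
    have hfilter : (Finset.range 1).filter P = Finset.range 1 := by
      apply Finset.filter_true_of_mem
      intro k hk
      rw [Finset.mem_range] at hk
      have hk0 : k = 0 := by omega
      subst hk0
      have hR0 : Rad F 0 D = 0 := by
        have : ∀ x : Fin 0 → X, empRad F 0 x = 0 := by
          intro x
          have := mul_empRad_eq hF hbdd 0 x
          have h2 : ∀ η : Fin 0 → Bool, gU F 0 x η = 0 := by
            intro η
            have hset : {r : ℝ | ∃ f ∈ F, r = ∑ i : Fin 0, rsign (η i) * f (x i)} = {0} := by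
              ext r
              simp only [Set.mem_setOf_eq, Set.mem_singleton_iff, Finset.univ_eq_empty,
                Finset.sum_empty]
              exact ⟨fun ⟨f, _, h⟩ => h, fun h => ⟨hF.choose, hF.choose_spec, h⟩⟩
            rw [gU, hset, csSup_singleton]
          rw [empRad]
          have h3 : ∀ η : Fin 0 → Bool,
              sSup {r : ℝ | ∃ f ∈ F, r = (1 / ((0:ℕ) : ℝ)) * ∑ i, rsign (η i) * f (x i)}
                = 0 := by
            intro η
            have hset : {r : ℝ | ∃ f ∈ F,
                r = (1 / ((0:ℕ) : ℝ)) * ∑ i : Fin 0, rsign (η i) * f (x i)} = {0} := by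
              ext r
              simp only [Set.mem_setOf_eq, Set.mem_singleton_iff, Nat.cast_zero, div_zero,
                zero_mul, Finset.univ_eq_empty, Finset.sum_empty]
              exact ⟨fun ⟨f, _, h⟩ => h, fun h => ⟨hF.choose, hF.choose_spec, h⟩⟩
            rw [hset, csSup_singleton]
          rw [Fintype.sum_congr _ _ h3]
          simp
        rw [Rad]
        rw [integral_congr_ae (Filter.Eventually.of_forall this)]
        simp
      show Rad F 0 D ≤ Rad F 0 D / (1 - p - ε)
      rw [hR0]
      simp
    rw [hfilter]
    simp only [Finset.range_one, Finset.sum_singleton]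
    norm_num
    linarith [show w 0 = 1 by simp [hw]]
  -- main case m ≥ 1
  have hm' : (0:ℝ) < m := by exact_mod_cast hm0
  have h1δ : 1 ≤ 1 / δ := by rw [le_div_iff₀ hδ0]; linarith
  have hL : 0 ≤ Real.log (1 / δ) := Real.log_nonneg h1δ
  have hε2 : ε ^ 2 = Real.log (1 / δ) / (2 * m) := Real.sq_sqrt (by positivity)
  set t : ℝ := 4 * ε with ht
  have htnn : 0 ≤ t := by positivity
  set c : ℝ := 1 - p - ε with hc
  have hcpos : 0 < c := hm
  -- bad set is contained in the low set
  have hsubset : (Finset.range (m + 1)).filter (fun k => ¬ P k)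
      ⊆ (Finset.range (m + 1)).filter (fun k : ℕ => (k : ℝ) ≤ c * m) := by
    intro k hk
    rw [Finset.mem_filter] at hk ⊢
    refine ⟨hk.1, ?_⟩
    by_contra hlt
    push_neg at hlt
    have hk0 : (0:ℝ) < k := lt_trans (by positivity) hlt
    have hkm : k ≤ m := Nat.lt_succ_iff.mp (Finset.mem_range.mp hk.1)
    have hmono := Rad_mono hF hbdd hmeas hkm
    have hknn : 0 ≤ Rad F k D := Rad_nonneg hF hbdd k
    have : Rad F k D ≤ Rad F m D / c := by
      rw [le_div_iff₀ hcpos]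
      nlinarith [mul_le_mul_of_nonneg_left hmono hcpos.le,
        mul_le_mul_of_nonneg_right hlt.le hRadnn]
    exact hk.2 this
  -- Chernoff bound on the low set
  have hhoeff : p + (1 - p) * Real.exp (-t) ≤ Real.exp (-((1 - p) * t) + t ^ 2 / 8) := by
    have h := hoeff_scalar p (1 - p) hp0 (by linarith) (by ring) t
    have hepos : (0:ℝ) < Real.exp (-((1 - p) * t)) := Real.exp_pos _
    have h2 := mul_le_mul_of_nonneg_right h hepos.le
    calc p + (1 - p) * Real.exp (-t)
        = (p * Real.exp ((1 - p) * t) + (1 - p) * Real.exp (-(p * t)))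
            * Real.exp (-((1 - p) * t)) := by
          rw [add_mul, mul_assoc, mul_assoc, ← Real.exp_add, ← Real.exp_add]
          rw [show (1 - p) * t + -((1 - p) * t) = 0 by ring,
            show -(p * t) + -((1 - p) * t) = -t by ring, Real.exp_zero, mul_one]
      _ ≤ Real.exp (t ^ 2 / 8) * Real.exp (-((1 - p) * t)) := h2
      _ = Real.exp (-((1 - p) * t) + t ^ 2 / 8) := by rw [← Real.exp_add]; ring_nf
  have hbase_nn : 0 ≤ p + (1 - p) * Real.exp (-t) := by positivity
  have hbad : ∑ k ∈ (Finset.range (m + 1)).filter (fun k => ¬ P k), w k ≤ δ := by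
    have h1 : ∑ k ∈ (Finset.range (m + 1)).filter (fun k => ¬ P k), w k
        ≤ ∑ k ∈ (Finset.range (m + 1)).filter (fun k : ℕ => (k : ℝ) ≤ c * m), w k :=
      Finset.sum_le_sum_of_subset_of_nonneg hsubset (fun k _ _ => hwnn k)
    have h2 : ∑ k ∈ (Finset.range (m + 1)).filter (fun k : ℕ => (k : ℝ) ≤ c * m), w k
        ≤ ∑ k ∈ (Finset.range (m + 1)).filter (fun k : ℕ => (k : ℝ) ≤ c * m),
            w k * Real.exp (t * (c * m - k)) := by
      apply Finset.sum_le_sum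
      intro k hk
      rw [Finset.mem_filter] at hk
      have : 0 ≤ t * (c * m - k) := mul_nonneg htnn (by linarith [hk.2])
      nlinarith [Real.one_le_exp this, hwnn k]
    have h3 : ∑ k ∈ (Finset.range (m + 1)).filter (fun k : ℕ => (k : ℝ) ≤ c * m),
          w k * Real.exp (t * (c * m - k))
        ≤ ∑ k ∈ Finset.range (m + 1), w k * Real.exp (t * (c * m - k)) :=
      Finset.sum_le_sum_of_subset_of_nonneg (Finset.filter_subset _ _)
        (fun k _ _ => mul_nonneg (hwnn k) (Real.exp_nonneg _))
    have h4 : ∑ k ∈ Finset.range (m + 1), w k * Real.exp (t * (c * m - k))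
        = Real.exp (t * (c * m)) * ((1 - p) * Real.exp (-t) + p) ^ m := by
      rw [add_pow, Finset.mul_sum]
      apply Finset.sum_congr rfl
      intro k hk
      have hkm : k ≤ m := Nat.lt_succ_iff.mp (Finset.mem_range.mp hk)
      have hexp : Real.exp (t * (c * m - k)) = Real.exp (t * (c * m)) * Real.exp (-t) ^ k := by
        rw [← Real.exp_nat_mul, ← Real.exp_add]
        congr 1
        ring
      rw [hexp, hw, mul_pow]
      ring
    have h5 : ((1 - p) * Real.exp (-t) + p) ^ m
        ≤ Real.exp (-((1 - p) * t) + t ^ 2 / 8) ^ m := by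
      apply pow_le_pow_left₀ (by linarith [hbase_nn]) (by linarith [hhoeff]) m
    have h6 : Real.exp (t * (c * m)) * Real.exp (-((1 - p) * t) + t ^ 2 / 8) ^ m = δ := by
      rw [← Real.exp_nat_mul, ← Real.exp_add]
      have harg : t * (c * m) + (m : ℝ) * (-((1 - p) * t) + t ^ 2 / 8)
          = -Real.log (1 / δ) := by
        have h2m : 2 * (m : ℝ) * ε ^ 2 = Real.log (1 / δ) := by
          rw [hε2]; field_simp
        calc t * (c * m) + (m : ℝ) * (-((1 - p) * t) + t ^ 2 / 8)
            = (m : ℝ) * (t * c - (1 - p) * t + t ^ 2 / 8) := by ring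
          _ = (m : ℝ) * (-(4 * ε) * ε + (4 * ε) ^ 2 / 8) := by rw [hc, ht]; ring_nf
          _ = -(2 * (m : ℝ) * ε ^ 2) := by ring
          _ = -Real.log (1 / δ) := by rw [h2m]
      rw [harg, Real.log_div one_ne_zero (ne_of_gt hδ0), Real.log_one]
      simp [Real.exp_log hδ0]
    calc ∑ k ∈ (Finset.range (m + 1)).filter (fun k => ¬ P k), w k
        ≤ ∑ k ∈ Finset.range (m + 1), w k * Real.exp (t * (c * m - k)) :=
          h1.trans (h2.trans h3)
      _ = Real.exp (t * (c * m)) * ((1 - p) * Real.exp (-t) + p) ^ m := h4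
      _ ≤ Real.exp (t * (c * m)) * Real.exp (-((1 - p) * t) + t ^ 2 / 8) ^ m := by
          apply mul_le_mul_of_nonneg_left h5 (Real.exp_nonneg _)
      _ = δ := h6
  have hsplit := Finset.sum_filter_add_sum_filter_not (Finset.range (m + 1)) P w
  have hfin : 1 - δ ≤ ∑ k ∈ (Finset.range (m + 1)).filter P, w k := by
    linarith [hbad, hsplit, htotal]
  exact hfin
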